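/- arXiv:2012.05371 — 3 statements merged into one kernel-verified Lean document; each statement's English description precedes it below -/
import Mathlib

section
/- Let φ be an r×1 vector of compactly supported functions in L²(ℝ) satisfying φ = 2∑_{k∈ℤ}a(k)φ(2·−k) a.e. for a finitely supported sequence a:ℤ→ℂ^{r×r}. Put [l_φ,h_φ] := fs(φ) and [l_a,h_a] := fs(a), and let n_φ ≥ max(−l_φ,−l_a) be an integer. Then for every integer n with 1−h_φ ≤ n ≤ n_φ−1 and for a.e. x∈ℝ, φ(x−n)·χ_{[0,∞)}(x) = 2∑_{k=1−h_φ}^{n_φ−1} a(k−2n)·φ(2x−k)·χ_{[0,∞)}(2x) + 2∑_{k≥n_φ} a(k−2n)·φ(2x−k), where in the last sum only finitely many terms are nonzero and each φ(2·−k), k≥n_φ, is supported in [0,∞). -/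
open MeasureTheory Matrix Finset Filter

noncomputable section

namespace Wavelets

/-- membership in `L²(ℝ)` (w.r.t. Lebesgue measure). -/
def MemL2 (f : ℝ → ℂ) : Prop := MeasureTheory.MemLp f 2 (volume : Measure ℝ)

/-- The `L²` inner product `⟨f,g⟩ = ∫ f · conj g`. -/
def inn (f g : ℝ → ℂ) : ℂ := ∫ x : ℝ, f x * (starRingEnd ℂ) (g x)

/-- The squared `L²` norm. -/
def nsq (f : ℝ → ℂ) : ℝ := ∫ x : ℝ, ‖f x‖ ^ 2

/-- supported (a.e.) in `[0,∞)`, i.e. `f` belongs to `L²([0,∞))` if it is also in `L²`. -/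
def SuppHalf (f : ℝ → ℂ) : Prop := ∀ᵐ (x : ℝ) ∂volume, x < 0 → f x = 0

/-- vanishes a.e. outside the interval `[l,h]`. -/
def VanishOutside (f : ℝ → ℂ) (l h : ℤ) : Prop :=
  ∀ᵐ (x : ℝ) ∂volume, x ∉ Set.Icc (l : ℝ) (h : ℝ) → f x = 0

/-- compactly supported (a.e.). -/
def CptSupp (f : ℝ → ℂ) : Prop := ∃ l h : ℤ, VanishOutside f l h

/-- `[l,h] = fs(f)` : the shortest integer-endpoint interval outside which all members of the
family `f` vanish a.e. -/
def IsFS {ι : Type*} (f : ι → ℝ → ℂ) (l h : ℤ) : Prop :=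
  (∀ i, VanishOutside (f i) l h) ∧
    ∀ l' h' : ℤ, (∀ i, VanishOutside (f i) l' h') → l' ≤ l ∧ h ≤ h'

/-- `[l,h] = fs(a)` : the shortest integer interval containing the support of the sequence `a`. -/
def IsFSfilter {M : Type*} [Zero M] (a : ℤ → M) (l h : ℤ) : Prop :=
  (∀ k : ℤ, k ∉ Set.Icc l h → a k = 0) ∧
    ∀ l' h' : ℤ, (∀ k : ℤ, k ∉ Set.Icc l' h' → a k = 0) → l' ≤ l ∧ h ≤ h'

/-- finitely supported sequence. -/
def FinSupp {M : Type*} [Zero M] (a : ℤ → M) : Prop := (Function.support a).Finite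

/-- `(filtSum A φ i x) = (∑_{k∈ℤ} A(k)·φ(x−k))_i`. -/
def filtSum {B : Type*} {r : ℕ} (A : ℤ → Matrix B (Fin r) ℂ) (φ : Fin r → ℝ → ℂ)
    (i : B) (x : ℝ) : ℂ :=
  ∑ᶠ k : ℤ, ∑ j : Fin r, A k i j * φ j (x - (k : ℝ))

/-- `(filtSumGe A φ n i x) = (∑_{k ≥ n} A(k)·φ(x−k))_i`. -/
def filtSumGe {B : Type*} {r : ℕ} (A : ℤ → Matrix B (Fin r) ℂ) (φ : Fin r → ℝ → ℂ)
    (n : ℤ) (i : B) (x : ℝ) : ℂ :=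
  ∑ᶠ (k : ℤ) (_ : n ≤ k), ∑ j : Fin r, A k i j * φ j (x - (k : ℝ))

/-- dyadic dilation `2^{j/2} f(2^j ·)`. -/
def dil (j : ℤ) (f : ℝ → ℂ) : ℝ → ℂ :=
  fun x => ((Real.sqrt 2 ^ j : ℝ) : ℂ) * f ((2 : ℝ) ^ j * x)

/-- finite linear combination of a family of functions. -/
def fc {I : Type*} (c : I →₀ ℂ) (F : I → ℝ → ℂ) : ℝ → ℂ :=
  fun x => ∑ i ∈ c.support, c i * F i x

/-- Riesz sequence (of functions, in `L²`). -/
def RieszSeq {I : Type*} (F : I → ℝ → ℂ) : Prop :=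
  ∃ C > (0 : ℝ), ∀ c : I →₀ ℂ,
    C⁻¹ * (∑ i ∈ c.support, ‖c i‖ ^ 2) ≤ nsq (fc c F) ∧
      nsq (fc c F) ≤ C * (∑ i ∈ c.support, ‖c i‖ ^ 2)

/-- Bessel sequence in `L²(ℝ)`. -/
def Bessel {I : Type*} (F : I → ℝ → ℂ) : Prop :=
  ∃ C > (0 : ℝ), ∀ f : ℝ → ℂ, MemL2 f → (∑' i : I, ‖inn f (F i)‖ ^ 2) ≤ C * nsq f

/-- Bessel sequence in `L²([0,∞))`. -/
def BesselHalf {I : Type*} (F : I → ℝ → ℂ) : Prop :=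
  ∃ C > (0 : ℝ), ∀ f : ℝ → ℂ, MemL2 f → SuppHalf f →
    (∑' i : I, ‖inn f (F i)‖ ^ 2) ≤ C * nsq f

/-- `f` lies in the `L²`-closure of the linear span of the family `F`. -/
def InClosedSpan {I : Type*} (F : I → ℝ → ℂ) (f : ℝ → ℂ) : Prop :=
  MemL2 f ∧ ∀ ε > (0 : ℝ), ∃ c : I →₀ ℂ, nsq (fun x => f x - fc c F x) < ε ^ 2

/-- Riesz basis of `L²(ℝ)`. -/
def RieszBasisR {I : Type*} (F : I → ℝ → ℂ) : Prop :=
  (∀ i, MemL2 (F i)) ∧ RieszSeq F ∧ ∀ f : ℝ → ℂ, MemL2 f → InClosedSpan F f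

/-- Riesz basis of `L²([0,∞))`. -/
def RieszBasisHalf {I : Type*} (F : I → ℝ → ℂ) : Prop :=
  (∀ i, MemL2 (F i) ∧ SuppHalf (F i)) ∧ RieszSeq F ∧
    ∀ f : ℝ → ℂ, MemL2 f → SuppHalf f → InClosedSpan F f

/-- biorthogonal families over the same index set. -/
def Biorth {I : Type*} [DecidableEq I] (F G : I → ℝ → ℂ) : Prop :=
  ∀ i j : I, inn (F i) (G j) = if i = j then 1 else 0

/-- orthonormal family of functions. -/
def OrthonormalFam {I : Type*} [DecidableEq I] (F : I → ℝ → ℂ) : Prop :=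
  ∀ i j : I, inn (F i) (F j) = if i = j then 1 else 0

/-- orthonormal basis of `L²([0,∞))`. -/
def ONBasisHalf {I : Type*} [DecidableEq I] (F : I → ℝ → ℂ) : Prop :=
  (∀ i, MemL2 (F i) ∧ SuppHalf (F i)) ∧ OrthonormalFam F ∧
    ∀ f : ℝ → ℂ, MemL2 f → SuppHalf f → InClosedSpan F f

/-- orthonormal basis of `L²(ℝ)`. -/
def ONBasisR {I : Type*} [DecidableEq I] (F : I → ℝ → ℂ) : Prop :=
  (∀ i, MemL2 (F i)) ∧ OrthonormalFam F ∧ ∀ f : ℝ → ℂ, MemL2 f → InClosedSpan F f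

/-- `f` has (at least) `m` vanishing moments. -/
def VMo (f : ℝ → ℂ) (m : ℕ) : Prop := ∀ j < m, (∫ x : ℝ, (x : ℂ) ^ j * f x) = 0

/-- index set of the affine system `AS₀(φ;ψ)` over `ℝ`. -/
abbrev ASIndexR (r : ℕ) := (Fin r × ℤ) ⊕ (Fin r × ℕ × ℤ)

/-- the affine system `AS₀(φ;ψ)` over the real line. -/
def ASR {r : ℕ} (φ ψ : Fin r → ℝ → ℂ) : ASIndexR r → ℝ → ℂ
  | Sum.inl (i, k) => fun x => φ i (x - (k : ℝ))
  | Sum.inr (i, j, k) => fun x =>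
      ((Real.sqrt 2 ^ (j : ℕ) : ℝ) : ℂ) * ψ i ((2 : ℝ) ^ (j : ℕ) * x - (k : ℝ))

/-- index set `{boundary} ⊔ {(component, shift k ≥ n)}`. -/
abbrev HIdx (B : Type*) (r : ℕ) (n : ℤ) := B ⊕ (Fin r × {k : ℤ // n ≤ k})

/-- the family `Φ = {φ^L} ∪ {φ(·−k) : k ≥ n}`. -/
def PhiFam {B : Type*} {r : ℕ} (φL : B → ℝ → ℂ) (φ : Fin r → ℝ → ℂ) (n : ℤ) :
    HIdx B r n → ℝ → ℂ
  | Sum.inl i => φL i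
  | Sum.inr (i, k) => fun x => φ i (x - (k.1 : ℝ))

/-- the augmented boundary block `{φ^L} ∪ {φ(·−(n+t)) : 0 ≤ t < m}`. -/
def bdryAug {B : Type*} {r : ℕ} (φL : B → ℝ → ℂ) (φ : Fin r → ℝ → ℂ) (n : ℤ) (m : ℕ) :
    (B ⊕ Fin r × Fin m) → ℝ → ℂ
  | Sum.inl i => φL i
  | Sum.inr (i, t) => fun x => φ i (x - ((n + (t : ℕ) : ℤ) : ℝ))

/-- index set of the system `AS_J(Φ;Ψ)_{[0,∞)}`. -/
abbrev ASIdxH (A B : Type*) (J : ℤ) := A ⊕ ({j : ℤ // J ≤ j} × B)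

/-- the system `AS_J(Φ;Ψ)_{[0,∞)} = {2^{J/2}h(2^J·) : h ∈ Φ} ∪ {2^{j/2}η(2^j·) : j ≥ J, η ∈ Ψ}`. -/
def ASH {A B : Type*} (Φ : A → ℝ → ℂ) (Ψ : B → ℝ → ℂ) (J : ℤ) : ASIdxH A B J → ℝ → ℂ
  | Sum.inl a => dil J (Φ a)
  | Sum.inr (j, b) => dil j.1 (Ψ b)

/-- nonstationary system `AS_J(Φ_J;{Ψ_j}_{j≥J})` where the scale `J+n` uses the family `Ψ n`. -/
def ASHns {A : Type*} {B : ℕ → Type*} (Φ : A → ℝ → ℂ) (Ψ : ∀ n, B n → ℝ → ℂ) (J : ℤ) :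
    (A ⊕ (Σ n : ℕ, B n)) → ℝ → ℂ
  | Sum.inl a => dil J (Φ a)
  | Sum.inr ⟨n, b⟩ => dil (J + (n : ℤ)) (Ψ n b)

/-- the Fourier series `û(ξ) = ∑_k u(k) e^{−ikξ}` of a finitely supported matrix filter. -/
def fhat {r : ℕ} (a : ℤ → Matrix (Fin r) (Fin r) ℂ) (ξ : ℝ) : Matrix (Fin r) (Fin r) ℂ :=
  ∑ᶠ k : ℤ, Complex.exp (-(Complex.I * (k : ℂ) * (ξ : ℂ))) • a k

/-- the shift `η(·−k₀)` is supported in `[0,∞)` and satisfies the one-sided refinement relation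
`η(·−k₀) = 2 ∑_{k≥n} u(k−2k₀) φ(2·−k)`. -/
def shiftRef {r : ℕ} (η φ : Fin r → ℝ → ℂ) (u : ℤ → Matrix (Fin r) (Fin r) ℂ)
    (n k₀ : ℤ) : Prop :=
  ∀ i : Fin r, (∀ᵐ (x : ℝ) ∂volume, x < 0 → η i (x - (k₀ : ℝ)) = 0) ∧
    ∀ᵐ (x : ℝ) ∂volume,
      η i (x - (k₀ : ℝ)) = 2 * filtSumGe (fun k => u (k - 2 * k₀)) φ n i (2 * x)

/-- the partial sums `∑_{i∈s} c_i F_i` converge (as a net over finite subsets) to `f` in `L²`. -/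
def L2LimTo {I : Type*} (c : I → ℂ) (F : I → ℝ → ℂ) (f : ℝ → ℂ) : Prop :=
  ∀ ε > (0 : ℝ), ∃ s₀ : Finset I, ∀ s : Finset I, s₀ ⊆ s →
    nsq (fun x => f x - ∑ i ∈ s, c i * F i x) < ε ^ 2

/-- `p(d/dx) f(x) |_{x=0}` with one-sided (right) derivatives at `0`. -/
def pD (p : Polynomial ℂ) (f : ℝ → ℂ) : ℂ :=
  ∑ n ∈ Finset.range (p.natDegree + 1),
    p.coeff n * iteratedDerivWithin n f (Set.Ici (0 : ℝ)) 0

/-- Riesz sequence in an abstract Hilbert space. -/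
def RieszSeqH {H : Type*} [NormedAddCommGroup H] [InnerProductSpace ℂ H]
    {I : Type*} (h : I → H) : Prop :=
  ∃ C > (0 : ℝ), ∀ c : I →₀ ℂ,
    C⁻¹ * (∑ i ∈ c.support, ‖c i‖ ^ 2) ≤ ‖∑ i ∈ c.support, c i • h i‖ ^ 2 ∧
      ‖∑ i ∈ c.support, c i • h i‖ ^ 2 ≤ C * (∑ i ∈ c.support, ‖c i‖ ^ 2)

/-- Bessel sequence in an abstract Hilbert space. -/
def BesselH {H : Type*} [NormedAddCommGroup H] [InnerProductSpace ℂ H]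
    {I : Type*} (h : I → H) : Prop :=
  ∃ C > (0 : ℝ), ∀ f : H, (∑' i : I, ‖(inner ℂ f (h i) : ℂ)‖ ^ 2) ≤ C * ‖f‖ ^ 2

/-- reindexing of `Φ = {φ^L}∪{φ(·−k):k≥n}` splitting off the shifts `n ≤ k < nt` into the
boundary block. -/
def phiReindex {p r : ℕ} (n nt : ℤ) (h : n ≤ nt) :
    HIdx (Fin p) r n → HIdx (Fin p ⊕ Fin r × Fin (nt - n).toNat) r nt
  | Sum.inl i => Sum.inl (Sum.inl i)
  | Sum.inr (i, k) =>
      if hk : nt ≤ k.1 then Sum.inr (i, ⟨k.1, hk⟩)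
      else Sum.inl (Sum.inr (i, ⟨(k.1 - n).toNat, by
        have hnk := k.2; omega⟩))

/-- embedding of the boundary block `{ψ^L}∪{ψ(·−(n+t)) : t < m}` into `{ψ^L}∪{ψ(·−k):k≥n}`. -/
def embBdry {q r : ℕ} (n : ℤ) (m : ℕ) :
    (Fin q ⊕ Fin r × Fin m) → HIdx (Fin q) r n
  | Sum.inl i => Sum.inl i
  | Sum.inr (i, t) => Sum.inr (i, ⟨n + (t : ℕ), by omega⟩)

/-- A compactly supported biorthogonal (multi)wavelet in `L²(ℝ)` together with a finitely
supported biorthogonal wavelet filter bank, as in Theorem `thm:bw` of the paper. -/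
structure BiorthWaveletFB (r : ℕ) where
  φ : Fin r → ℝ → ℂ
  ψ : Fin r → ℝ → ℂ
  tφ : Fin r → ℝ → ℂ
  tψ : Fin r → ℝ → ℂ
  a : ℤ → Matrix (Fin r) (Fin r) ℂ
  b : ℤ → Matrix (Fin r) (Fin r) ℂ
  ta : ℤ → Matrix (Fin r) (Fin r) ℂ
  tb : ℤ → Matrix (Fin r) (Fin r) ℂ
  memL2 : ∀ i, MemL2 (φ i) ∧ MemL2 (ψ i) ∧ MemL2 (tφ i) ∧ MemL2 (tψ i)
  cpt : ∀ i, CptSupp (φ i) ∧ CptSupp (ψ i) ∧ CptSupp (tφ i) ∧ CptSupp (tψ i)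
  fin_a : FinSupp a
  fin_b : FinSupp b
  fin_ta : FinSupp ta
  fin_tb : FinSupp tb
  ref_φ : ∀ i, ∀ᵐ (x : ℝ) ∂volume, φ i x = 2 * filtSum a φ i (2 * x)
  ref_ψ : ∀ i, ∀ᵐ (x : ℝ) ∂volume, ψ i x = 2 * filtSum b φ i (2 * x)
  ref_tφ : ∀ i, ∀ᵐ (x : ℝ) ∂volume, tφ i x = 2 * filtSum ta tφ i (2 * x)
  ref_tψ : ∀ i, ∀ᵐ (x : ℝ) ∂volume, tψ i x = 2 * filtSum tb tφ i (2 * x)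
  biorth_shift : ∀ k : ℤ, ∀ i j : Fin r,
    inn (φ i) (fun x => tφ j (x - (k : ℝ))) = if k = 0 ∧ i = j then 1 else 0
  pr₁ : ∀ ξ : ℝ,
    fhat ta ξ * (fhat a ξ)ᴴ + fhat ta (ξ + Real.pi) * (fhat a (ξ + Real.pi))ᴴ = 1
  pr₂ : ∀ ξ : ℝ,
    fhat ta ξ * (fhat b ξ)ᴴ + fhat ta (ξ + Real.pi) * (fhat b (ξ + Real.pi))ᴴ = 0
  pr₃ : ∀ ξ : ℝ,
    fhat tb ξ * (fhat a ξ)ᴴ + fhat tb (ξ + Real.pi) * (fhat a (ξ + Real.pi))ᴴ = 0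
  pr₄ : ∀ ξ : ℝ,
    fhat tb ξ * (fhat b ξ)ᴴ + fhat tb (ξ + Real.pi) * (fhat b (ξ + Real.pi))ᴴ = 1
  rieszR : RieszBasisR (ASR φ ψ)
  rieszRt : RieszBasisR (ASR tφ tψ)
  biorthAS : Biorth (ASR φ ψ) (ASR tφ tψ)

/-- A compactly supported biorthogonal (multi)wavelet in `L²(ℝ)` (no filter bank data). -/
structure BiorthWavelet (r : ℕ) where
  φ : Fin r → ℝ → ℂ
  ψ : Fin r → ℝ → ℂ
  tφ : Fin r → ℝ → ℂ
  tψ : Fin r → ℝ → ℂ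
  memL2 : ∀ i, MemL2 (φ i) ∧ MemL2 (ψ i) ∧ MemL2 (tφ i) ∧ MemL2 (tψ i)
  cpt : ∀ i, CptSupp (φ i) ∧ CptSupp (ψ i) ∧ CptSupp (tφ i) ∧ CptSupp (tψ i)
  rieszR : RieszBasisR (ASR φ ψ)
  rieszRt : RieszBasisR (ASR tφ tψ)
  biorthAS : Biorth (ASR φ ψ) (ASR tφ tψ)


private lemma ae_shift' {p : ℝ → Prop} (h : ∀ᵐ (y : ℝ) ∂volume, p y) (c : ℝ) :
    ∀ᵐ (x : ℝ) ∂volume, p (x - c) :=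
  (measurePreserving_sub_right (volume : Measure ℝ) c).quasiMeasurePreserving.ae h

private lemma qmp_two : Measure.QuasiMeasurePreserving (fun x : ℝ => 2 * x)
    (volume : Measure ℝ) (volume : Measure ℝ) := by
  refine ⟨(measurable_const_mul 2), ?_⟩
  rw [Real.map_volume_mul_left (two_ne_zero)]
  exact Measure.smul_absolutelyContinuous

private lemma ae_scale_shift' {p : ℝ → Prop} (h : ∀ᵐ (y : ℝ) ∂volume, p y) (c : ℝ) :
    ∀ᵐ (x : ℝ) ∂volume, p (2 * x - c) := by
  have := (((measurePreserving_sub_right (volume : Measure ℝ) c).quasiMeasurePreserving).comp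
    qmp_two).ae h
  simpa [Function.comp] using this

/-- one-sided refinement relation for the truncated shifts
`φ(·−n)χ_{[0,∞)}`, `1−h_φ ≤ n ≤ n_φ−1`, of a refinable vector function. -/
theorem truncated_shifts_refinement
    {r : ℕ} (φ : Fin r → ℝ → ℂ) (hL2 : ∀ i, MemL2 (φ i))
    (a : ℤ → Matrix (Fin r) (Fin r) ℂ) (hfin : FinSupp a)
    (lφ hφ la ha : ℤ) (hfsφ : IsFS φ lφ hφ) (hfsa : IsFSfilter a la ha)
    (href : ∀ i, ∀ᵐ (x : ℝ) ∂volume, φ i x = 2 * filtSum a φ i (2 * x))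
    (nφ : ℤ) (hnφ : -lφ ≤ nφ ∧ -la ≤ nφ) :
    (∀ k : ℤ, nφ ≤ k → ∀ i, ∀ᵐ (x : ℝ) ∂volume, x < 0 → φ i (x - (k : ℝ)) = 0) ∧
    ∀ n : ℤ, 1 - hφ ≤ n → n ≤ nφ - 1 → ∀ i, ∀ᵐ (x : ℝ) ∂volume,
      (if 0 ≤ x then φ i (x - (n : ℝ)) else 0) =
        2 * (∑ k ∈ Finset.Icc (1 - hφ) (nφ - 1), ∑ j,
              a (k - 2 * n) i j * (if 0 ≤ 2 * x then φ j (2 * x - (k : ℝ)) else 0)) +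
        2 * filtSumGe (fun k => a (k - 2 * n)) φ nφ i (2 * x) := by
  constructor
  · intro k hk i
    filter_upwards [ae_shift' (hfsφ.1 i) (k : ℝ)] with x h hx
    apply h
    simp only [Set.mem_Icc, not_and_or, not_le]
    left
    have h1 : (-lφ : ℝ) ≤ (k : ℝ) := by exact_mod_cast le_trans hnφ.1 hk
    linarith
  · intro n hn1 hn2 i
    have hA := ae_shift' (href i) (n : ℝ)
    have hB : ∀ᵐ (x : ℝ) ∂volume, ∀ j : Fin r, ∀ k : ℤ,
        (2 * x - (k : ℝ)) ∉ Set.Icc (lφ : ℝ) (hφ : ℝ) → φ j (2 * x - (k : ℝ)) = 0 := by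
      rw [MeasureTheory.ae_all_iff]
      intro j
      rw [MeasureTheory.ae_all_iff]
      intro k
      exact ae_scale_shift' (hfsφ.1 j) (k : ℝ)
    have hx0 : ∀ᵐ (x : ℝ) ∂volume, x ≠ 0 := by
      refine MeasureTheory.ae_iff.mpr ?_
      have : {x : ℝ | ¬ x ≠ 0} = {0} := by ext y; simp
      rw [this]
      exact measure_singleton 0
    filter_upwards [hA, hB, hx0] with x hA hB hx0
    classical
    set g : ℤ → ℂ := fun k => ∑ j, a (k - 2 * n) i j * φ j (2 * x - (k : ℝ)) with hg
    set S : Finset ℤ := Finset.Icc (2 * n + la) (2 * n + ha) with hS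
    have hgz : ∀ k : ℤ, k ∉ S → g k = 0 := by
      intro k hk
      have hak : a (k - 2 * n) = 0 := by
        apply hfsa.1
        simp only [Set.mem_Icc]
        simp only [hS, Finset.mem_Icc] at hk
        omega
      simp [hg, hak]
    -- rewrite the refinement sum as a finite sum over S
    have h1 : filtSum a φ i (2 * (x - (n : ℝ))) = ∑ k ∈ S, g k := by
      have hsupp : Function.support
          (fun k : ℤ => ∑ j, a k i j * φ j (2 * (x - (n : ℝ)) - (k : ℝ)))
          ⊆ ↑(Finset.Icc la ha) := by
        intro k hk
        simp only [Finset.coe_Icc]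
        by_contra hmem
        apply hk
        have hak : a k = 0 := hfsa.1 k hmem
        simp [hak]
      have e1 : filtSum a φ i (2 * (x - (n : ℝ)))
          = ∑ k ∈ Finset.Icc la ha, ∑ j, a k i j * φ j (2 * (x - (n : ℝ)) - (k : ℝ)) :=
        finsum_eq_sum_of_support_subset _ hsupp
      rw [e1]
      have e2 : S = Finset.map (addLeftEmbedding (2 * n)) (Finset.Icc la ha) := by
        rw [Finset.map_add_left_Icc]
      rw [e2, Finset.sum_map]
      refine Finset.sum_congr rfl fun k _ => ?_
      refine Finset.sum_congr rfl fun j _ => ?_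
      have ea : (addLeftEmbedding (2 * n) : ℤ ↪ ℤ) k = 2 * n + k := rfl
      rw [ea]
      have eb : 2 * n + k - 2 * n = k := by ring
      rw [eb]
      congr 1
      congr 1
      push_cast
      ring
    -- rewrite filtSumGe as a finite sum over S
    have h2 : filtSumGe (fun k => a (k - 2 * n)) φ nφ i (2 * x)
        = ∑ k ∈ S, (if nφ ≤ k then g k else 0) := by
      have e1 : filtSumGe (fun k => a (k - 2 * n)) φ nφ i (2 * x)
          = ∑ᶠ k : ℤ, (if nφ ≤ k then g k else 0) := by
        rw [filtSumGe]
        refine finsum_congr fun k => ?_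
        rw [finsum_eq_if]
      rw [e1]
      refine finsum_eq_sum_of_support_subset _ ?_
      intro k hk
      simp only [Function.mem_support] at hk
      by_contra hmem
      apply hk
      rw [hgz k hmem]
      simp
    rw [hA]
    have harg : 2 * (x - (n : ℝ)) = 2 * x - 2 * (n : ℝ) := by ring
    rcases lt_or_gt_of_ne hx0 with hneg | hpos
    · -- x < 0
      have hif : ¬ (0 ≤ x) := not_le.mpr hneg
      have hif2 : ¬ (0 ≤ 2 * x) := by intro h; nlinarith
      rw [if_neg hif, h2]
      have hz : ∑ k ∈ S, (if nφ ≤ k then g k else 0) = 0 := by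
        refine Finset.sum_eq_zero fun k _ => ?_
        by_cases hk : nφ ≤ k
        · rw [if_pos hk]
          refine Finset.sum_eq_zero fun j _ => ?_
          have hmem : 2 * x - (k : ℝ) ∉ Set.Icc (lφ : ℝ) (hφ : ℝ) := by
            simp only [Set.mem_Icc, not_and_or, not_le]
            left
            have h1 : (-lφ : ℝ) ≤ (k : ℝ) := by exact_mod_cast le_trans hnφ.1 hk
            linarith
          rw [hB j k hmem, mul_zero]
        · rw [if_neg hk]
      have hz2 : (∑ k ∈ Finset.Icc (1 - hφ) (nφ - 1), ∑ j,
          a (k - 2 * n) i j * (if 0 ≤ 2 * x then φ j (2 * x - (k : ℝ)) else 0)) = 0 := by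
        refine Finset.sum_eq_zero fun k _ => Finset.sum_eq_zero fun j _ => ?_
        rw [if_neg hif2, mul_zero]
      rw [hz, hz2]
      ring
    · -- x > 0
      have hif : (0 : ℝ) ≤ x := le_of_lt hpos
      have hif2 : (0 : ℝ) ≤ 2 * x := by linarith
      rw [if_pos hif, h1, h2]
      simp only [if_pos hif2]
      have key : ∀ k ∈ S, g k =
          (if k ∈ Finset.Icc (1 - hφ) (nφ - 1) then g k else 0)
            + (if nφ ≤ k then g k else 0) := by
        intro k _
        by_cases hk1 : nφ ≤ k
        · rw [if_neg (by simp only [Finset.mem_Icc]; omega), if_pos hk1, zero_add]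
        · by_cases hk2 : 1 - hφ ≤ k
          · rw [if_pos (by simp only [Finset.mem_Icc]; omega), if_neg hk1, add_zero]
          · have hgk : g k = 0 := by
              refine Finset.sum_eq_zero fun j _ => ?_
              have hmem : 2 * x - (k : ℝ) ∉ Set.Icc (lφ : ℝ) (hφ : ℝ) := by
                simp only [Set.mem_Icc, not_and_or, not_le]
                right
                have h1 : (k : ℝ) ≤ (-hφ : ℝ) := by
                  have : k ≤ -hφ := by omega
                  exact_mod_cast this
                linarith
              rw [hB j k hmem, mul_zero]
            rw [hgk, if_neg (by simp only [Finset.mem_Icc]; omega), if_neg hk1, add_zero]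
      rw [Finset.sum_congr rfl key, Finset.sum_add_distrib, mul_add]
      have hI : ∑ k ∈ S, (if k ∈ Finset.Icc (1 - hφ) (nφ - 1) then g k else 0)
          = ∑ k ∈ Finset.Icc (1 - hφ) (nφ - 1), g k := by
        rw [Finset.sum_ite_mem]
        refine Finset.sum_subset Finset.inter_subset_right fun k hkI hkn => ?_
        exact hgz k fun hkS => hkn (Finset.mem_inter.mpr ⟨hkS, hkI⟩)
      rw [hI]

end Wavelets
end
end

section
/- Let s,t ≥ 1 be integers, A₀,A₁ ∈ ℂ^{s×s} and Ã₀,Ã₁ ∈ ℂ^{t×t} be matrices, and let v:ℝ→ℂ^s and w:ℝ→ℂ^t be vector functions whose components are square-integrable and vanish a.e. outside [0,1], satisfying v = 2A₀·v(2·) + 2A₁·v(2·−1) and w = 2Ã₀·w(2·) + 2Ã₁·w(2·−1) a.e. Then the t×s matrix M := ∫₀¹ w(x)·conj(v(x))ᵀ dx satisfies the functional equation M = 2Ã₀·M·A₀* + 2Ã₁·M·A₁*, where A* denotes the conjugate transpose of A. -/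
open MeasureTheory Matrix Finset Filter

noncomputable section

namespace Wavelets

/-- transfer of a.e. properties along `x ↦ 2x`. -/
lemma ae_comp_two {P : ℝ → Prop} (h : ∀ᵐ x ∂(volume : Measure ℝ), P x) :
    ∀ᵐ x ∂(volume : Measure ℝ), P (2 * x) := by
  have hq : Measure.QuasiMeasurePreserving (fun x : ℝ => 2 * x) volume volume := by
    refine ⟨measurable_const_mul 2, ?_⟩
    rw [Real.map_volume_mul_left (two_ne_zero)]
    exact Measure.AbsolutelyContinuous.rfl.smul_left _
  exact hq.ae h

/-- transfer of a.e. properties along `x ↦ 2x - 1`. -/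
lemma ae_comp_two_sub {P : ℝ → Prop} (h : ∀ᵐ x ∂(volume : Measure ℝ), P x) :
    ∀ᵐ x ∂(volume : Measure ℝ), P (2 * x - 1) :=
  ae_comp_two ((measurePreserving_sub_right volume 1).quasiMeasurePreserving.ae h)

lemma integral_comp_two_mul (h : ℝ → ℂ) :
    ∫ x : ℝ, h (2 * x) = ((2 : ℝ)⁻¹ : ℂ) * ∫ x : ℝ, h x := by
  rw [MeasureTheory.Measure.integral_comp_mul_left h 2,
    abs_of_pos (by norm_num : (0:ℝ) < (2:ℝ)⁻¹), Complex.real_smul, Complex.ofReal_inv,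
    Complex.ofReal_ofNat]

lemma integral_comp_two_mul_sub (h : ℝ → ℂ) :
    ∫ x : ℝ, h (2 * x - 1) = ((2 : ℝ)⁻¹ : ℂ) * ∫ x : ℝ, h x := by
  have h1 : (fun x : ℝ => h (2 * x - 1)) = fun x => (fun y => h (y - 1)) (2 * x) := rfl
  rw [h1, MeasureTheory.Measure.integral_comp_mul_left (fun y => h (y - 1)) 2,
    integral_sub_right_eq_self h 1,
    abs_of_pos (by norm_num : (0:ℝ) < (2:ℝ)⁻¹), Complex.real_smul, Complex.ofReal_inv,
    Complex.ofReal_ofNat]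

lemma prod_expand {m n : ℕ} (a f : Fin m → ℂ) (b g : Fin n → ℂ) :
    (2 * ∑ i, a i * f i) * (starRingEnd ℂ) (2 * ∑ j, b j * g j)
    = 4 * ∑ i, ∑ j, a i * (starRingEnd ℂ) (b j) * (f i * (starRingEnd ℂ) (g j)) := by
  simp only [_root_.map_mul, map_sum, map_ofNat, Finset.mul_sum, Finset.sum_mul]
  rw [Finset.sum_comm]
  exact Finset.sum_congr rfl fun i _ => Finset.sum_congr rfl fun j _ => by ring

/-- the Gram matrix of two refinable vector functions supported in `[0,1]`
satisfies the functional equation `M = 2Ã₀MA₀* + 2Ã₁MA₁*`. -/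
theorem gram_matrix_identity
    {s t : ℕ} (hs : 1 ≤ s) (ht : 1 ≤ t)
    (A0 A1 : Matrix (Fin s) (Fin s) ℂ) (tA0 tA1 : Matrix (Fin t) (Fin t) ℂ)
    (v : Fin s → ℝ → ℂ) (w : Fin t → ℝ → ℂ)
    (hv2 : ∀ i, MemL2 (v i)) (hw2 : ∀ i, MemL2 (w i))
    (hvsupp : ∀ i, ∀ᵐ (x : ℝ) ∂volume, x ∉ Set.Icc (0 : ℝ) 1 → v i x = 0)
    (hwsupp : ∀ i, ∀ᵐ (x : ℝ) ∂volume, x ∉ Set.Icc (0 : ℝ) 1 → w i x = 0)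
    (hrefv : ∀ i, ∀ᵐ (x : ℝ) ∂volume,
      v i x = 2 * ∑ i', A0 i i' * v i' (2 * x) + 2 * ∑ i', A1 i i' * v i' (2 * x - 1))
    (hrefw : ∀ i, ∀ᵐ (x : ℝ) ∂volume,
      w i x = 2 * ∑ i', tA0 i i' * w i' (2 * x) + 2 * ∑ i', tA1 i i' * w i' (2 * x - 1))
    (M : Matrix (Fin t) (Fin s) ℂ)
    (hM : ∀ i j, M i j = ∫ x in Set.Icc (0 : ℝ) 1, w i x * (starRingEnd ℂ) (v j x)) :
    M = (2 : ℂ) • (tA0 * M * A0ᴴ) + (2 : ℂ) • (tA1 * M * A1ᴴ) := by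
  classical
  -- basic integrability of the products
  have hone : (1 : ENNReal) / 1 = 1 / 2 + 1 / 2 := by
    rw [ENNReal.div_add_div_same]
    norm_num
    rw [ENNReal.div_self two_ne_zero ENNReal.ofNat_ne_top]
  have hvc : ∀ j, MemLp (fun x => (starRingEnd ℂ) (v j x)) 2 (volume : Measure ℝ) :=
    fun j => Complex.conjCLE.toContinuousLinearMap.comp_memLp' (hv2 j)
  have hint : ∀ i j, Integrable (fun x => w i x * (starRingEnd ℂ) (v j x)) volume :=
    fun i j => memLp_one_iff_integrable.mp ((hvc j).smul (r := 1) (hw2 i))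
  -- the Gram entries as full-line integrals
  have hMfull : ∀ i j, M i j = ∫ x : ℝ, w i x * (starRingEnd ℂ) (v j x) := by
    intro i j
    rw [hM i j]
    apply setIntegral_eq_integral_of_ae_compl_eq_zero
    filter_upwards [hwsupp i] with x hx hxs
    rw [hx hxs, zero_mul]
  -- dilated integrals
  have hdil0 : ∀ i j, (∫ x : ℝ, w i (2 * x) * (starRingEnd ℂ) (v j (2 * x)))
      = ((2 : ℝ)⁻¹ : ℂ) * M i j := by
    intro i j
    rw [integral_comp_two_mul (fun y => w i y * (starRingEnd ℂ) (v j y)), hMfull i j]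
  have hdil1 : ∀ i j, (∫ x : ℝ, w i (2 * x - 1) * (starRingEnd ℂ) (v j (2 * x - 1)))
      = ((2 : ℝ)⁻¹ : ℂ) * M i j := by
    intro i j
    rw [integral_comp_two_mul_sub (fun y => w i y * (starRingEnd ℂ) (v j y)), hMfull i j]
  -- a.e. support statements for the dilated functions
  have hws2 : ∀ᵐ x : ℝ ∂volume, ∀ i, (2 * x) ∉ Set.Icc (0:ℝ) 1 → w i (2 * x) = 0 :=
    ae_comp_two (ae_all_iff.2 hwsupp)
  have hvs2 : ∀ᵐ x : ℝ ∂volume, ∀ j, (2 * x) ∉ Set.Icc (0:ℝ) 1 → v j (2 * x) = 0 :=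
    ae_comp_two (ae_all_iff.2 hvsupp)
  have hws2s : ∀ᵐ x : ℝ ∂volume, ∀ i, (2 * x - 1) ∉ Set.Icc (0:ℝ) 1 → w i (2 * x - 1) = 0 :=
    ae_comp_two_sub (ae_all_iff.2 hwsupp)
  have hvs2s : ∀ᵐ x : ℝ ∂volume, ∀ j, (2 * x - 1) ∉ Set.Icc (0:ℝ) 1 → v j (2 * x - 1) = 0 :=
    ae_comp_two_sub (ae_all_iff.2 hvsupp)
  have hhalf : ∀ᵐ x : ℝ ∂volume, x ≠ (2⁻¹ : ℝ) := by
    rw [MeasureTheory.ae_iff]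
    simpa using Real.volume_singleton (a := (2⁻¹ : ℝ))
  -- the scalar identity for each entry
  have key : ∀ i j, M i j
      = 2 * (∑ i', ∑ j', tA0 i i' * (starRingEnd ℂ) (A0 j j') * M i' j')
      + 2 * (∑ i', ∑ j', tA1 i i' * (starRingEnd ℂ) (A1 j j') * M i' j') := by
    intro i j
    set E0 : ℝ → ℂ := fun x => ∑ i', ∑ j', tA0 i i' * (starRingEnd ℂ) (A0 j j')
      * (w i' (2 * x) * (starRingEnd ℂ) (v j' (2 * x))) with hE0def
    set E1 : ℝ → ℂ := fun x => ∑ i', ∑ j', tA1 i i' * (starRingEnd ℂ) (A1 j j')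
      * (w i' (2 * x - 1) * (starRingEnd ℂ) (v j' (2 * x - 1))) with hE1def
    have hE0int : Integrable E0 volume := by
      apply integrable_finset_sum
      intro i' _
      apply integrable_finset_sum
      intro j' _
      exact ((hint i' j').comp_mul_left' two_ne_zero).const_mul _
    have hE1int : Integrable E1 volume := by
      apply integrable_finset_sum
      intro i' _
      apply integrable_finset_sum
      intro j' _
      exact (((hint i' j').comp_sub_right 1).comp_mul_left' two_ne_zero).const_mul _
    have hae : (fun x => w i x * (starRingEnd ℂ) (v j x))
        =ᵐ[volume] fun x => 4 * E0 x + 4 * E1 x := by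
      filter_upwards [hrefw i, hrefv j, hws2, hvs2, hws2s, hvs2s, hhalf]
        with x hwr hvr hw0 hv0 hw1 hv1 hx
      rcases lt_or_gt_of_ne hx with hlt | hgt
      · -- x < 1/2, so 2x - 1 < 0
        have hout : (2 * x - 1) ∉ Set.Icc (0:ℝ) 1 := by
          simp only [Set.mem_Icc, not_and_or, not_le]
          left; linarith
        have hw1' : ∀ i', w i' (2 * x - 1) = 0 := fun i' => hw1 i' hout
        have hv1' : ∀ j', v j' (2 * x - 1) = 0 := fun j' => hv1 j' hout
        have hE1z : E1 x = 0 := by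
          simp [hE1def, hw1']
        rw [hwr, hvr, hE1z, mul_zero, add_zero]
        simp only [hw1', hv1', mul_zero, Finset.sum_const_zero, mul_zero, add_zero]
        exact prod_expand (fun i' => tA0 i i') (fun i' => w i' (2 * x))
          (fun j' => A0 j j') (fun j' => v j' (2 * x))
      · -- x > 1/2, so 2x > 1
        have hout : (2 * x) ∉ Set.Icc (0:ℝ) 1 := by
          simp only [Set.mem_Icc, not_and_or, not_le]
          right; linarith
        have hw0' : ∀ i', w i' (2 * x) = 0 := fun i' => hw0 i' hout
        have hv0' : ∀ j', v j' (2 * x) = 0 := fun j' => hv0 j' hout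
        have hE0z : E0 x = 0 := by
          simp [hE0def, hw0']
        rw [hwr, hvr, hE0z, mul_zero, zero_add]
        simp only [hw0', hv0', mul_zero, Finset.sum_const_zero, mul_zero, zero_add]
        exact prod_expand (fun i' => tA1 i i') (fun i' => w i' (2 * x - 1))
          (fun j' => A1 j j') (fun j' => v j' (2 * x - 1))
    have hIE0 : (∫ x : ℝ, E0 x)
        = ∑ i', ∑ j', tA0 i i' * (starRingEnd ℂ) (A0 j j') * (((2:ℝ)⁻¹ : ℂ) * M i' j') := by
      rw [integral_finset_sum _ (fun i' _ => integrable_finset_sum _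
        (fun j' _ => ((hint i' j').comp_mul_left' two_ne_zero).const_mul _))]
      refine Finset.sum_congr rfl fun i' _ => ?_
      rw [integral_finset_sum _ (fun j' _ => ((hint i' j').comp_mul_left' two_ne_zero).const_mul _)]
      refine Finset.sum_congr rfl fun j' _ => ?_
      rw [integral_const_mul, hdil0 i' j']
    have hIE1 : (∫ x : ℝ, E1 x)
        = ∑ i', ∑ j', tA1 i i' * (starRingEnd ℂ) (A1 j j') * (((2:ℝ)⁻¹ : ℂ) * M i' j') := by
      rw [integral_finset_sum _ (fun i' _ => integrable_finset_sum _
        (fun j' _ => (((hint i' j').comp_sub_right 1).comp_mul_left' two_ne_zero).const_mul _))]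
      refine Finset.sum_congr rfl fun i' _ => ?_
      rw [integral_finset_sum _
        (fun j' _ => (((hint i' j').comp_sub_right 1).comp_mul_left' two_ne_zero).const_mul _)]
      refine Finset.sum_congr rfl fun j' _ => ?_
      rw [integral_const_mul, hdil1 i' j']
    calc M i j = ∫ x : ℝ, w i x * (starRingEnd ℂ) (v j x) := hMfull i j
      _ = ∫ x : ℝ, (4 * E0 x + 4 * E1 x) := integral_congr_ae hae
      _ = 4 * (∫ x : ℝ, E0 x) + 4 * (∫ x : ℝ, E1 x) := by
          rw [integral_add (hE0int.const_mul 4) (hE1int.const_mul 4),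
            integral_const_mul, integral_const_mul]
      _ = 2 * (∑ i', ∑ j', tA0 i i' * (starRingEnd ℂ) (A0 j j') * M i' j')
          + 2 * (∑ i', ∑ j', tA1 i i' * (starRingEnd ℂ) (A1 j j') * M i' j') := by
          rw [hIE0, hIE1]
          simp only [Finset.mul_sum]
          congr 1 <;>
            exact Finset.sum_congr rfl fun i' _ => Finset.sum_congr rfl fun j' _ => by
              push_cast
              ring
  -- conclude the matrix identity
  ext i j
  rw [key i j]
  simp only [Matrix.add_apply, Matrix.smul_apply, Matrix.mul_apply, Matrix.conjTranspose_apply,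
    smul_eq_mul, Finset.sum_mul, Finset.mul_sum]
  congr 1 <;>
  · rw [Finset.sum_comm]
    exact Finset.sum_congr rfl fun i' _ => Finset.sum_congr rfl fun j' _ => by
      rw [starRingEnd_apply]
      ring


end Wavelets
end
end

section
/- Let H be a complex Hilbert space and let (φ_i)_{i∈I}, (φ̃_i)_{i∈I} and (ψ_j)_{j∈J} be countable families in H such that: (φ_i)_{i∈I} is a Riesz sequence; (φ̃_i)_{i∈I} is a Riesz sequence biorthogonal to (φ_i)_{i∈I}, i.e., ⟨φ_i,φ̃_{i'}⟩ = δ_{i,i'}; (ψ_j)_{j∈J} is a Riesz sequence; and ⟨ψ_j,φ̃_i⟩ = 0 for all i∈I and j∈J. Then the combined family consisting of (φ_i)_{i∈I} together with (ψ_j)_{j∈J}, indexed by the disjoint union I⊔J, is a Riesz sequence in H. -/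
open MeasureTheory Matrix Finset Filter

noncomputable section

namespace Wavelets

private lemma sum_split_aux {α β M : Type*} [AddCommMonoid M] (s : Finset (α ⊕ β))
    (G : α ⊕ β → M) :
    ∑ k ∈ s, G k = ∑ i ∈ s.toLeft, G (Sum.inl i) + ∑ j ∈ s.toRight, G (Sum.inr j) := by
  conv_lhs => rw [← Finset.toLeft_disjSum_toRight (u := s)]
  rw [Finset.sum_disjSum]

set_option maxHeartbeats 1600000 in
/-- a Riesz sequence together with a further Riesz sequence orthogonal to a
biorthogonal dual of the first is again a Riesz sequence. -/
theorem riesz_union_riesz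
    {H : Type*} [NormedAddCommGroup H] [InnerProductSpace ℂ H] [CompleteSpace H]
    {I J : Type*} [Countable I] [Countable J] [DecidableEq I]
    (φ tφ : I → H) (ψ : J → H)
    (hφ : RieszSeqH φ) (htφ : RieszSeqH tφ)
    (hbiorth : ∀ i i' : I, (inner ℂ (φ i) (tφ i') : ℂ) = if i = i' then 1 else 0)
    (hψ : RieszSeqH ψ)
    (horth : ∀ (i : I) (j : J), (inner ℂ (ψ j) (tφ i) : ℂ) = 0) :
    RieszSeqH (Sum.elim φ ψ) := by
  classical
  obtain ⟨Cφ, hCφ, Hφ⟩ := hφ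
  obtain ⟨Ct, hCt, Ht⟩ := htφ
  obtain ⟨Cψ, hCψ, Hψ⟩ := hψ
  refine ⟨Ct + Cψ * (2 + 2 * Cφ * Ct) + 2 * (Cφ + Cψ) + 1, by positivity, ?_⟩
  intro c
  set L := c.support.toLeft with hLdef
  set R := c.support.toRight with hRdef
  have hmemL : ∀ i : I, i ∈ L ↔ c (Sum.inl i) ≠ 0 := by
    intro i; simp [hLdef, Finsupp.mem_support_iff]
  have hmemR : ∀ j : J, j ∈ R ↔ c (Sum.inr j) ≠ 0 := by
    intro j; simp [hRdef, Finsupp.mem_support_iff]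
  set c₁ : I →₀ ℂ := ⟨L, fun i => c (Sum.inl i), hmemL⟩ with hc₁def
  set c₂ : J →₀ ℂ := ⟨R, fun j => c (Sum.inr j), hmemR⟩ with hc₂def
  set fφ : H := ∑ i ∈ L, c (Sum.inl i) • φ i with hfφdef
  set fψ : H := ∑ j ∈ R, c (Sum.inr j) • ψ j with hfψdef
  set Sl : ℝ := ∑ i ∈ L, ‖c (Sum.inl i)‖ ^ 2 with hSldef
  set Sr : ℝ := ∑ j ∈ R, ‖c (Sum.inr j)‖ ^ 2 with hSrdef
  have hSl0 : 0 ≤ Sl := Finset.sum_nonneg fun _ _ => by positivity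
  have hSr0 : 0 ≤ Sr := Finset.sum_nonneg fun _ _ => by positivity
  -- rewrite the goal sums via the split
  have hsplit_sum : ∑ k ∈ c.support, c k • Sum.elim φ ψ k = fφ + fψ := by
    rw [sum_split_aux]; rfl
  have hsplit_sq : ∑ k ∈ c.support, ‖c k‖ ^ 2 = Sl + Sr := by
    rw [sum_split_aux]
  rw [hsplit_sum, hsplit_sq]
  set f : H := fφ + fψ with hfdef
  -- Riesz bounds for the individual pieces
  have hφb := Hφ c₁
  have hψb := Hψ c₂
  have htb := Ht c₁
  have hc₁s : c₁.support = L := rfl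
  have hc₂s : c₂.support = R := rfl
  rw [hc₁s] at hφb htb
  rw [hc₂s] at hψb
  have hc₁a : ∀ i, c₁ i = c (Sum.inl i) := fun _ => rfl
  have hc₂a : ∀ j, c₂ j = c (Sum.inr j) := fun _ => rfl
  simp only [hc₁a] at hφb htb
  simp only [hc₂a] at hψb
  have hφ_up : ‖fφ‖ ^ 2 ≤ Cφ * Sl := hφb.2
  have hψ_lo : Cψ⁻¹ * Sr ≤ ‖fψ‖ ^ 2 := hψb.1
  have hψ_up : ‖fψ‖ ^ 2 ≤ Cψ * Sr := hψb.2
  -- the dual test vector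
  set g : H := ∑ i ∈ L, c (Sum.inl i) • tφ i with hgdef
  have hg_up : ‖g‖ ^ 2 ≤ Ct * Sl := htb.2
  -- ⟨f, tφ i⟩ = conj (c (inl i)) for i ∈ L
  have h1 : ∀ i ∈ L, (inner ℂ f (tφ i) : ℂ) = (starRingEnd ℂ) (c (Sum.inl i)) := by
    intro i hi
    rw [hfdef, inner_add_left]
    have e1 : (inner ℂ fφ (tφ i) : ℂ) = (starRingEnd ℂ) (c (Sum.inl i)) := by
      rw [hfφdef, sum_inner]
      simp only [inner_smul_left, hbiorth, mul_ite, mul_one, mul_zero]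
      rw [Finset.sum_ite_eq' L i (fun i' => (starRingEnd ℂ) (c (Sum.inl i')))]
      simp [hi]
    have e2 : (inner ℂ fψ (tφ i) : ℂ) = 0 := by
      rw [hfψdef, sum_inner]
      simp [inner_smul_left, horth]
    rw [e1, e2, add_zero]
  -- ⟨f, g⟩ = Sl
  have hfg : (inner ℂ f g : ℂ) = (Sl : ℂ) := by
    rw [hgdef, inner_sum]
    have : ∀ i ∈ L, (inner ℂ f (c (Sum.inl i) • tφ i) : ℂ) = (‖c (Sum.inl i)‖ ^ 2 : ℝ) := by
      intro i hi
      rw [inner_smul_right, h1 i hi, RCLike.mul_conj]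
      norm_cast
    rw [Finset.sum_congr rfl this, hSldef]
    push_cast
    ring
  -- Sl ≤ Ct * ‖f‖²
  have hSl_le : Sl ≤ Ct * ‖f‖ ^ 2 := by
    have h2 : Sl ≤ ‖f‖ * ‖g‖ := by
      calc Sl = ‖(Sl : ℂ)‖ := by simp [abs_of_nonneg hSl0]
        _ = ‖(inner ℂ f g : ℂ)‖ := by rw [hfg]
        _ ≤ ‖f‖ * ‖g‖ := norm_inner_le_norm f g
    have hg0 : 0 ≤ ‖g‖ := norm_nonneg g
    have hf0 : 0 ≤ ‖f‖ := norm_nonneg f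
    rcases eq_or_lt_of_le hSl0 with h0 | h0
    · rw [← h0]; positivity
    · have h3 : Sl ^ 2 ≤ ‖f‖ ^ 2 * (Ct * Sl) := by
        calc Sl ^ 2 ≤ (‖f‖ * ‖g‖) ^ 2 := pow_le_pow_left₀ hSl0 h2 2
          _ = ‖f‖ ^ 2 * ‖g‖ ^ 2 := by ring
          _ ≤ ‖f‖ ^ 2 * (Ct * Sl) :=
            mul_le_mul_of_nonneg_left hg_up (sq_nonneg ‖f‖)
      nlinarith [h3, h0]
  clear_value L R c₁ c₂ fφ fψ Sl Sr f g
  clear hfg h1 hSldef hSrdef hgdef hfφdef hfψdef hc₁def hc₂def hLdef hRdef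
  clear hsplit_sum hsplit_sq hmemL hmemR hc₁a hc₂a hc₁s hc₂s hφb hψb htb
  clear Hφ Ht Hψ hbiorth horth
  -- ‖fψ‖² is controlled by ‖f‖²
  have hfψ_le : ‖fψ‖ ^ 2 ≤ 2 * ‖f‖ ^ 2 + 2 * Cφ * Sl := by
    have hle : ‖fψ‖ ≤ ‖f‖ + ‖fφ‖ := by
      have he : fψ = f - fφ := by rw [hfdef]; abel
      rw [he]
      exact norm_sub_le f fφ
    have hsq : ‖fψ‖ ^ 2 ≤ (‖f‖ + ‖fφ‖) ^ 2 :=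
      pow_le_pow_left₀ (norm_nonneg fψ) hle 2
    nlinarith [sq_nonneg (‖f‖ - ‖fφ‖), hφ_up]
  have hSr_le : Sr ≤ Cψ * (2 * ‖f‖ ^ 2 + 2 * Cφ * Sl) := by
    have := hψ_lo
    have h3 : Sr ≤ Cψ * ‖fψ‖ ^ 2 := by
      rw [inv_mul_le_iff₀ hCψ] at hψ_lo
      linarith [mul_le_mul_of_nonneg_left hψ_up (le_of_lt hCψ)]
    calc Sr ≤ Cψ * ‖fψ‖ ^ 2 := h3
      _ ≤ Cψ * (2 * ‖f‖ ^ 2 + 2 * Cφ * Sl) :=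
        mul_le_mul_of_nonneg_left hfψ_le (le_of_lt hCψ)
  constructor
  · -- lower Riesz bound
    rw [inv_mul_le_iff₀ (by positivity)]
    have hkey : Cψ * (2 * Cφ) * Sl ≤ Cψ * (2 * Cφ) * (Ct * ‖f‖ ^ 2) :=
      mul_le_mul_of_nonneg_left hSl_le (by positivity)
    have hpos : 0 ≤ (2 * (Cφ + Cψ) + 1) * ‖f‖ ^ 2 := by positivity
    nlinarith [hSl_le, hSr_le, hkey, hpos]
  · -- upper Riesz bound
    have hup : ‖f‖ ^ 2 ≤ 2 * Cφ * Sl + 2 * Cψ * Sr := by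
      have h4 : ‖f‖ ≤ ‖fφ‖ + ‖fψ‖ := by rw [hfdef]; exact norm_add_le fφ fψ
      have hsq : ‖f‖ ^ 2 ≤ (‖fφ‖ + ‖fψ‖) ^ 2 := pow_le_pow_left₀ (norm_nonneg f) h4 2
      nlinarith [sq_nonneg (‖fφ‖ - ‖fψ‖), hφ_up, hψ_up]
    have h5 : 0 ≤ (Ct + Cψ * (2 + 2 * Cφ * Ct) + 1) * Sl := by positivity
    have h6 : 0 ≤ (Ct + Cψ * (2 + 2 * Cφ * Ct) + 1) * Sr := by positivity
    have h7 : 0 ≤ 2 * Cψ * Sl := by positivity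
    have h8 : 0 ≤ 2 * Cφ * Sr := by positivity
    nlinarith [hup, h5, h6, h7, h8]

end Wavelets
end
end
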